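/- If X is a Banach space that is coseparable in its bidual (i.e., X**/X is separable under the canonical embedding), then for every separable closed subspace Y ⊂ X, the double annihilator Y^⊥⊥ ⊂ X** is norm-separable, and for every coseparable closed subspace Y ⊂ X, the subspace Y^⊥⊥ ⊂ X** is coseparable in X**. -/

import Mathlib

open NormedSpace

variable {E : Type*} [NormedAddCommGroup E] [NormedSpace ℝ E]

/-- The annihilator of a submodule inside the continuous dual. -/
noncomputable def annih (Y : Submodule ℝ E) : Submodule ℝ (E →L[ℝ] ℝ) where
  carrier := {f | ∀ y ∈ Y, f y = 0}
  add_mem' := by intro f g hf hg y hy; simp [hf y hy, hg y hy]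
  zero_mem' := by intro y hy; simp
  smul_mem' := by intro c f hf y hy; simp [hf y hy]

noncomputable def rangeSub {V : Type*} [AddCommGroup V] [Module ℝ V] (J : V →ₗ[ℝ] (E →L[ℝ] ℝ)) :
    Submodule ℝ (E →L[ℝ] ℝ) := LinearMap.range J

lemma mem_annih_annih {X : Type*} [NormedAddCommGroup X] [NormedSpace ℝ X]
    (Y : Submodule ℝ X) {y : X} (hy : y ∈ Y) :
    inclusionInDoubleDual ℝ X y ∈ annih (annih Y) := fun f hf => hf y hy

lemma norm_J {X : Type*} [NormedAddCommGroup X] [NormedSpace ℝ X] (v : X) :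
    ‖inclusionInDoubleDual ℝ X v‖ = ‖v‖ := by
  have := (inclusionInDoubleDualLi ℝ (E := X)).norm_map v
  simpa [inclusionInDoubleDualLi] using this

lemma exists_close {X : Type*} [NormedAddCommGroup X] [NormedSpace ℝ X] [CompleteSpace X]
    (Y : Submodule ℝ X) (hY : IsClosed (Y : Set X))
    {F : (X →L[ℝ] ℝ) →L[ℝ] ℝ} (hF : F ∈ annih (annih Y)) (x : X) {ε : ℝ} (hε : 0 < ε) :
    ∃ y ∈ Y, ‖x - y‖ < ‖F - inclusionInDoubleDual ℝ X x‖ + ε := by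
  haveI := hY
  have key : ‖(Submodule.Quotient.mk x : X ⧸ Y)‖ ≤ ‖F - inclusionInDoubleDual ℝ X x‖ := by
    by_cases hx : (Submodule.Quotient.mk x : X ⧸ Y) = 0
    · simp only [hx, norm_zero]; positivity
    · obtain ⟨g, hg1, hgx⟩ := exists_dual_vector ℝ _ (norm_ne_zero_iff.mpr hx)
      have bound : ∀ v : X, ‖(g.toLinearMap ∘ₗ Y.mkQ) v‖ ≤ ‖g‖ * ‖v‖ := by
        intro v
        calc ‖g (Y.mkQ v)‖ ≤ ‖g‖ * ‖Y.mkQ v‖ := g.le_opNorm _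
        _ ≤ ‖g‖ * ‖v‖ := by
            apply mul_le_mul_of_nonneg_left _ (norm_nonneg g)
            simpa [Submodule.mkQ_apply] using Submodule.Quotient.norm_mk_le Y v
      set f : X →L[ℝ] ℝ := LinearMap.mkContinuous (g.toLinearMap ∘ₗ Y.mkQ) ‖g‖ bound with hfdef
      have hf_mem : f ∈ annih Y := by
        intro y hy
        have h0 : Y.mkQ y = 0 := by
          simpa [Submodule.mkQ_apply, Submodule.Quotient.mk_eq_zero] using hy
        show g (Y.mkQ y) = 0
        simp [h0]
      have hFf : F f = 0 := hF f hf_mem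
      have hfx : f x = ‖(Submodule.Quotient.mk x : X ⧸ Y)‖ := hgx
      have hfn : ‖f‖ ≤ 1 := by
        rw [← hg1]; exact LinearMap.mkContinuous_norm_le _ (norm_nonneg g) _
      have h1 : ‖(Submodule.Quotient.mk x : X ⧸ Y)‖ =
          (inclusionInDoubleDual ℝ X x - F) f := by
        simp [ContinuousLinearMap.sub_apply, hFf, dual_def, hfx]
      rw [h1]
      calc (inclusionInDoubleDual ℝ X x - F) f
          ≤ ‖(inclusionInDoubleDual ℝ X x - F) f‖ := le_abs_self _
        _ ≤ ‖inclusionInDoubleDual ℝ X x - F‖ * ‖f‖ := (inclusionInDoubleDual ℝ X x - F).le_opNorm f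
        _ ≤ ‖F - inclusionInDoubleDual ℝ X x‖ * 1 := by
            rw [show ‖inclusionInDoubleDual ℝ X x - F‖ = ‖F - inclusionInDoubleDual ℝ X x‖ from norm_sub_rev (inclusionInDoubleDual ℝ X x) F]
            exact mul_le_mul_of_nonneg_left hfn (ContinuousLinearMap.opNorm_nonneg _)
        _ = _ := mul_one _
  obtain ⟨m, hm_eq, hm_norm⟩ := Submodule.Quotient.norm_mk_lt (Submodule.Quotient.mk x : X ⧸ Y) hε
  refine ⟨x - m, ?_, ?_⟩
  · have := (Submodule.Quotient.eq Y).mp hm_eq.symm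
    simpa using this
  · rw [sub_sub_cancel]
    linarith

set_option maxHeartbeats 4000000 in
/-- If `X` is coseparable in its bidual, then the double annihilator of a separable
closed subspace is norm-separable, and the double annihilator of a coseparable
closed subspace is coseparable in the bidual. -/
theorem biduals_of_coseparable_in_bidual
    {X : Type*} [NormedAddCommGroup X] [NormedSpace ℝ X] [CompleteSpace X]
    (hX : TopologicalSpace.SeparableSpace
      (((X →L[ℝ] ℝ) →L[ℝ] ℝ) ⧸ (LinearMap.range (inclusionInDoubleDual ℝ X).toLinearMap))) :
    (∀ Y : Submodule ℝ X, IsClosed (Y : Set X) →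
      TopologicalSpace.IsSeparable (Y : Set X) →
      TopologicalSpace.IsSeparable
        ((annih (annih Y) : Set ((X →L[ℝ] ℝ) →L[ℝ] ℝ)))) ∧
    (∀ Y : Submodule ℝ X, IsClosed (Y : Set X) →
      TopologicalSpace.SeparableSpace (X ⧸ Y) →
      TopologicalSpace.SeparableSpace
        (((X →L[ℝ] ℝ) →L[ℝ] ℝ) ⧸ (annih (annih Y)))) := by
  classical
  let S' := rangeSub (E := X →L[ℝ] ℝ) (inclusionInDoubleDual ℝ X).toLinearMap
  have hX' : TopologicalSpace.SeparableSpace (((X →L[ℝ] ℝ) →L[ℝ] ℝ) ⧸ S') := by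
    let φ : (((X →L[ℝ] ℝ) →L[ℝ] ℝ) ⧸ (LinearMap.range (inclusionInDoubleDual ℝ X).toLinearMap)) →
        (((X →L[ℝ] ℝ) →L[ℝ] ℝ) ⧸ S') :=
      Quotient.lift (fun a => (Submodule.Quotient.mk a : ((X →L[ℝ] ℝ) →L[ℝ] ℝ) ⧸ S'))
        (fun a b h => by
          have h' := (Submodule.Quotient.eq _).mp (Quotient.sound h)
          obtain ⟨x, hx⟩ := h'
          exact (Submodule.Quotient.eq S').mpr ⟨x, hx⟩)
    have hφc : Continuous φ := continuous_quot_lift _ continuous_quot_mk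
    have hφs : Function.Surjective φ := by
      intro b
      obtain ⟨a, rfl⟩ := Submodule.Quotient.mk_surjective S' b
      exact ⟨Submodule.Quotient.mk a, rfl⟩
    exact hφs.denseRange.separableSpace hφc
  obtain ⟨D, Dcnt, Ddense⟩ := TopologicalSpace.exists_countable_dense
    (((X →L[ℝ] ℝ) →L[ℝ] ℝ) ⧸ S')
  let q : ((X →L[ℝ] ℝ) →L[ℝ] ℝ) →
      (((X →L[ℝ] ℝ) →L[ℝ] ℝ) ⧸ S') :=
    fun G => Submodule.Quotient.mk G
  have hq_sub : ∀ A B, q (A - B) = q A - q B := by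
    intro A B
    exact Submodule.Quotient.mk_sub _
  constructor
  · -- separable case
    intro Y hYc hYsep
    obtain ⟨c, ccnt, hc⟩ := hYsep
    let g : (((X →L[ℝ] ℝ) →L[ℝ] ℝ) ⧸ S') → ℕ →
        ((X →L[ℝ] ℝ) →L[ℝ] ℝ) :=
      fun d n => if h : ∃ G, G ∈ annih (annih Y) ∧ dist (q G) d < 1/((n:ℝ)+1)
        then h.choose else 0
    have hg : ∀ d (n : ℕ), (∃ G, G ∈ annih (annih Y) ∧ dist (q G) d < 1/((n:ℝ)+1)) →
        g d n ∈ annih (annih Y) ∧ dist (q (g d n)) d < 1/((n:ℝ)+1) := by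
      intro d n h
      simp only [g, dif_pos h]
      exact ⟨h.choose_spec.1, h.choose_spec.2⟩
    refine ⟨(fun t : (_ × ℕ) × X =>
        g t.1.1 t.1.2 + inclusionInDoubleDual ℝ X t.2) '' ((D ×ˢ Set.univ) ×ˢ c),
      ((Dcnt.prod Set.countable_univ).prod ccnt).image _, ?_⟩
    intro F hF
    refine (SeminormedAddCommGroup.mem_closure_iff
      (E := (X →L[ℝ] ℝ) →L[ℝ] ℝ) (a := F)).mpr ?_
    intro ε hε
    obtain ⟨n, hn⟩ := exists_nat_one_div_lt (show (0:ℝ) < ε/8 by linarith)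
    set δ := 1/((n:ℝ)+1) with hδdef
    have hδpos : 0 < δ := by positivity
    obtain ⟨d, hdD, hdd0⟩ := (SeminormedAddCommGroup.mem_closure_iff (E := ((X →L[ℝ] ℝ) →L[ℝ] ℝ) ⧸ S')).mp (Ddense (q F)) δ hδpos
    have hdd : dist (q F) d < δ := by rw [dist_eq_norm]; exact hdd0
    obtain ⟨hG1, hG2⟩ := hg d n ⟨F, hF, hdd⟩
    set G := g d n with hGdef
    have hqd : ‖q (F - G)‖ < 2*δ := by
      rw [hq_sub, show ‖q F - q G‖ = dist (q F) (q G) from (dist_eq_norm (q F) (q G)).symm]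
      calc dist (q F) (q G) ≤ dist (q F) d + dist d (q G) := dist_triangle _ _ _
        _ < δ + δ := by rw [dist_comm d]; exact add_lt_add hdd hG2
        _ = 2*δ := by ring
    obtain ⟨m, hm_eq, hm_norm⟩ := Submodule.Quotient.norm_mk_lt (q (F - G)) hδpos
    have hm3 : ‖m‖ < 3*δ := by linarith
    obtain ⟨x0, hx0⟩ := (Submodule.Quotient.eq _).mp hm_eq.symm
    have hx' : F - G - inclusionInDoubleDual ℝ X x0 = m := by
      rw [show inclusionInDoubleDual ℝ X x0 = F - G - m from hx0]; abel
    have hFG : F - G ∈ annih (annih Y) := Submodule.sub_mem _ hF hG1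
    obtain ⟨y, hyY, hy⟩ := exists_close Y hYc hFG x0 hδpos
    rw [hx'] at hy
    obtain ⟨z, hzc, hz⟩ := Metric.mem_closure_iff.mp (hc hyY) δ hδpos
    refine ⟨g d n + inclusionInDoubleDual ℝ X z,
      ⟨((d, n), z), ⟨⟨hdD, trivial⟩, hzc⟩, rfl⟩, ?_⟩
    have e1 : F - (G + inclusionInDoubleDual ℝ X z)
        = m + inclusionInDoubleDual ℝ X (x0 - z) := by
      rw [map_sub, ← hx']; abel
    rw [← hGdef, e1]
    calc ‖m + inclusionInDoubleDual ℝ X (x0 - z)‖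
        ≤ ‖m‖ + ‖inclusionInDoubleDual ℝ X (x0 - z)‖ := norm_add_le _ _
      _ = ‖m‖ + ‖x0 - z‖ := by rw [norm_J]
      _ ≤ ‖m‖ + (‖x0 - y‖ + ‖y - z‖) := by
          gcongr
          calc ‖x0 - z‖ = ‖(x0 - y) + (y - z)‖ := by abel_nf
            _ ≤ ‖x0 - y‖ + ‖y - z‖ := norm_add_le _ _
      _ < 3*δ + ((‖m‖ + δ) + δ) := by
          have hz' : ‖y - z‖ < δ := by rw [← dist_eq_norm]; exact hz
          exact add_lt_add hm3 (add_lt_add hy hz')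
      _ < ε := by
          have : δ < ε/8 := hn
          linarith
  · -- coseparable case
    intro Y hYc hYq
    obtain ⟨D', D'cnt, D'dense⟩ := TopologicalSpace.exists_countable_dense (X ⧸ Y)
    let p : ((X →L[ℝ] ℝ) →L[ℝ] ℝ) →
        (((X →L[ℝ] ℝ) →L[ℝ] ℝ) ⧸ (annih (annih Y))) :=
      fun G => Submodule.Quotient.mk G
    let g : (((X →L[ℝ] ℝ) →L[ℝ] ℝ) ⧸ S') → ℕ →
        ((X →L[ℝ] ℝ) →L[ℝ] ℝ) :=
      fun d n => if h : ∃ G, dist (q G) d < 1/((n:ℝ)+1) then h.choose else 0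
    have hg : ∀ d (n : ℕ), (∃ G, dist (q G) d < 1/((n:ℝ)+1)) →
        dist (q (g d n)) d < 1/((n:ℝ)+1) := by
      intro d n h
      simp only [g, dif_pos h]
      exact h.choose_spec
    let r : (X ⧸ Y) → X := fun u => (Submodule.Quotient.mk_surjective Y u).choose
    have hr : ∀ u, (Submodule.Quotient.mk (r u) : X ⧸ Y) = u :=
      fun u => (Submodule.Quotient.mk_surjective Y u).choose_spec
    refine ⟨⟨(fun t : (_ × ℕ) × (X ⧸ Y) =>
        p (g t.1.1 t.1.2 + inclusionInDoubleDual ℝ X (r t.2))) '' ((D ×ˢ Set.univ) ×ˢ D'),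
      ((Dcnt.prod Set.countable_univ).prod D'cnt).image _, ?_⟩⟩
    intro ξ
    obtain ⟨F, rfl⟩ := Submodule.Quotient.mk_surjective _ ξ
    refine (SeminormedAddCommGroup.mem_closure_iff
      (E := ((X →L[ℝ] ℝ) →L[ℝ] ℝ) ⧸ (annih (annih Y)))).mpr ?_
    intro ε hε
    obtain ⟨n, hn⟩ := exists_nat_one_div_lt (show (0:ℝ) < ε/8 by linarith)
    set δ := 1/((n:ℝ)+1) with hδdef
    have hδpos : 0 < δ := by positivity
    obtain ⟨d, hdD, hdd0⟩ := (SeminormedAddCommGroup.mem_closure_iff (E := ((X →L[ℝ] ℝ) →L[ℝ] ℝ) ⧸ S')).mp (Ddense (q F)) δ hδpos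
    have hdd : dist (q F) d < δ := by rw [dist_eq_norm]; exact hdd0
    have hG2 := hg d n ⟨F, hdd⟩
    set G := g d n with hGdef
    have hqd : ‖q (F - G)‖ < 2*δ := by
      rw [hq_sub, show ‖q F - q G‖ = dist (q F) (q G) from (dist_eq_norm (q F) (q G)).symm]
      calc dist (q F) (q G) ≤ dist (q F) d + dist d (q G) := dist_triangle _ _ _
        _ < δ + δ := by rw [dist_comm d]; exact add_lt_add hdd hG2
        _ = 2*δ := by ring
    obtain ⟨m, hm_eq, hm_norm⟩ := Submodule.Quotient.norm_mk_lt (q (F - G)) hδpos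
    have hm3 : ‖m‖ < 3*δ := by linarith
    obtain ⟨x0, hx0⟩ := (Submodule.Quotient.eq _).mp hm_eq.symm
    have hx' : F - G - inclusionInDoubleDual ℝ X x0 = m := by
      rw [show inclusionInDoubleDual ℝ X x0 = F - G - m from hx0]; abel
    obtain ⟨u, huD, hu⟩ := SeminormedAddCommGroup.mem_closure_iff.mp
      (D'dense (Submodule.Quotient.mk x0 : X ⧸ Y)) δ hδpos
    have hux : ‖(Submodule.Quotient.mk (x0 - r u) : X ⧸ Y)‖ < δ := by
      rw [Submodule.Quotient.mk_sub, hr]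
      exact hu
    obtain ⟨w, hw_eq, hw_norm⟩ :=
      Submodule.Quotient.norm_mk_lt (Submodule.Quotient.mk (x0 - r u) : X ⧸ Y) hδpos
    have hw2 : ‖w‖ < 2*δ := by linarith
    have hwY : x0 - r u - w ∈ Y := by
      have := (Submodule.Quotient.eq Y).mp hw_eq.symm
      simpa using this
    refine ⟨p (g d n + inclusionInDoubleDual ℝ X (r u)),
      ⟨((d, n), u), ⟨⟨hdD, trivial⟩, huD⟩, rfl⟩, ?_⟩
    have e2 : p (F - (G + inclusionInDoubleDual ℝ X (r u)))
        = p (m + inclusionInDoubleDual ℝ X w) := by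
      apply (Submodule.Quotient.eq _).mpr
      have e3 : F - (G + inclusionInDoubleDual ℝ X (r u)) -
          (m + inclusionInDoubleDual ℝ X w)
          = inclusionInDoubleDual ℝ X (x0 - r u - w) := by
        rw [map_sub, map_sub, ← hx']; abel
      rw [e3]
      exact mem_annih_annih Y hwY
    have e4 : (Submodule.Quotient.mk F : ((X →L[ℝ] ℝ) →L[ℝ] ℝ) ⧸ annih (annih Y))
        - p (G + inclusionInDoubleDual ℝ X (r u))
        = p (m + inclusionInDoubleDual ℝ X w) := by
      rw [← e2]
      exact (Submodule.Quotient.mk_sub _).symm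
    rw [← hGdef, e4]
    have hb : ‖p (m + inclusionInDoubleDual ℝ X w)‖ ≤ ‖m‖ + ‖w‖ := by
      have h1 : ‖p (m + inclusionInDoubleDual ℝ X w)‖ ≤ ‖m + inclusionInDoubleDual ℝ X w‖ :=
        Submodule.Quotient.norm_mk_le (annih (annih Y)) (m + inclusionInDoubleDual ℝ X w)
      have h2 : ‖m + inclusionInDoubleDual ℝ X w‖ ≤ ‖m‖ + ‖w‖ := by
        rw [← norm_J (X := X) w]
        exact norm_add_le _ _
      exact h1.trans h2
    have : δ < ε/8 := hn
    linarith
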